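/- The cardinality-based preference is represented by the utility function u: for every resource contribution game G, every kind of preferences pref ∈ {ct, ca, pca}, every player i and all profiles P, Q: Q ≺'^pref_i P if and only if u^pref_i(P) > u^pref_i(Q), where ≺'^pref_i is the cardinality-based strict preference and u^pref_i(P) = 2·|ε_i| + 1 − |P_i| when P ∈ good^pref(G,i), and u^pref_i(P) = |ε_i| − |P_i| otherwise. -/

import Mathlib

open scoped Classical

/-- A resource contribution game over atomic resource type `Res` with player set `ι`:
each player has a goal (a resource bundle, i.e. a multiset of atomic resources) and
an endowment (a resource bag, i.e. a multiset of resource bundles). -/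
structure RCG (Res ι : Type*) where
  goal : ι → Multiset Res
  endow : ι → Multiset (Multiset Res)

namespace RCG

variable {Res ι : Type*} [Fintype ι]

/-- A profile assigns to each player a bag (his contribution). -/
abbrev Profile (Res ι : Type*) := ι → Multiset (Multiset Res)

/-- Outcome of a profile: the multiset sum of all contributions. -/
def out (P : Profile Res ι) : Multiset (Multiset Res) := ∑ i, P i

/-- The bag `X` can be transformed into the bundle `B`: `♭(B) ⊆ ♭•(X)`. -/
def Trans (X : Multiset (Multiset Res)) (B : Multiset Res) : Prop := B ≤ X.sum

/-- Player `i` is potentially satisfied by profile `P`. -/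
def Psat (G : RCG Res ι) (P : Profile Res ι) (i : ι) : Prop :=
  Trans (out P) (G.goal i)

/-- The set of players potentially satisfied by `P`. -/
noncomputable def psatPlayers (G : RCG Res ι) (P : Profile Res ι) : Finset ι :=
  Finset.univ.filter fun i => Psat G P i

/-- The profile `P` is contentious. -/
def Contentious (G : RCG Res ι) (P : Profile Res ι) : Prop :=
  ¬ Trans (out P) (∑ j ∈ psatPlayers G P, G.goal j)

/-- Restriction of bundle `B` to the resource types occurring in `C`. -/
noncomputable def restr (B C : Multiset Res) : Multiset Res := B.filter (· ∈ C)

/-- The profile `P` is contentious for player `i`. -/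
def ContentiousFor (G : RCG Res ι) (P : Profile Res ι) (i : ι) : Prop :=
  Psat G P i ∧ ¬ Trans (out P) (∑ j ∈ psatPlayers G P, restr (G.goal j) (G.goal i))

/-- The three kinds of preferences: contention-tolerant, (public) contention-averse,
private contention-averse. -/
inductive Pref | ct | ca | pca

/-- `P` is a good profile for player `i` according to preference kind `pref`. -/
def Good (pref : Pref) (G : RCG Res ι) (P : Profile Res ι) (i : ι) : Prop :=
  match pref with
  | .ct => Psat G P i
  | .ca => Psat G P i ∧ ¬ Contentious G P
  | .pca => Psat G P i ∧ ¬ ContentiousFor G P i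

/-- Player `i` strictly prefers `P` over `Q` (i.e. `Q ≺^pref_i P`). -/
def Prefers (pref : Pref) (G : RCG Res ι) (i : ι) (Q P : Profile Res ι) : Prop :=
  (¬ Good pref G P i ∧ ¬ Good pref G Q i ∧ P i < Q i) ∨
  (Good pref G P i ∧ ¬ Good pref G Q i) ∨
  (Good pref G P i ∧ Good pref G Q i ∧ P i < Q i)

/-- `C` is a profitable deviation for player `i` from profile `P`. -/
noncomputable def ProfDev (pref : Pref) (G : RCG Res ι) (P : Profile Res ι) (i : ι)
    (C : Multiset (Multiset Res)) : Prop :=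
  C ≤ G.endow i ∧ Prefers pref G i P (Function.update P i C)

/-- `P` is a pure Nash equilibrium of `G` according to `pref`:
`P` is a profile of `G` and no player has a profitable deviation. -/
noncomputable def NE (pref : Pref) (G : RCG Res ι) (P : Profile Res ι) : Prop :=
  (∀ i, P i ≤ G.endow i) ∧ ∀ i C, ¬ ProfDev pref G P i C

/-- `G` is an RCG with endowments as bags of atomic resources. -/
def IsRCGBAR (G : RCG Res ι) : Prop :=
  ∀ i, ∀ B ∈ G.endow i, ∃ r : Res, B = {r}

/-- `G` has independent objectives. -/
def IndepObjectives (G : RCG Res ι) : Prop :=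
  ∀ i j : ι, i ≠ j → ∀ r : Res, r ∈ G.goal i → r ∉ G.goal j

end RCG

namespace RCG

variable {Res ι : Type*} [Fintype ι]

/-- Cardinality-based strict preference: `Q ≺'^pref_i P`. -/
def PrefersCard (pref : Pref) (G : RCG Res ι) (i : ι) (Q P : Profile Res ι) : Prop :=
  (¬ Good pref G P i ∧ ¬ Good pref G Q i ∧
    Multiset.card (P i) < Multiset.card (Q i)) ∨
  (Good pref G P i ∧ ¬ Good pref G Q i) ∨
  (Good pref G P i ∧ Good pref G Q i ∧
    Multiset.card (P i) < Multiset.card (Q i))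

/-- The utility function `u^pref_i`. -/
noncomputable def utility (pref : Pref) (G : RCG Res ι) (i : ι)
    (P : Profile Res ι) : ℤ :=
  if Good pref G P i then
    2 * (Multiset.card (G.endow i) : ℤ) + 1 - (Multiset.card (P i) : ℤ)
  else (Multiset.card (G.endow i) : ℤ) - (Multiset.card (P i) : ℤ)

end RCG

/-- the cardinality-based preference is represented by the utility
function `u^pref_i`. -/
theorem prefersCard_iff_utility_gt {Res ι : Type*} [Fintype ι]
    (pref : RCG.Pref) (G : RCG Res ι) (i : ι) (P Q : RCG.Profile Res ι)
    (hP : ∀ j, P j ≤ G.endow j) (hQ : ∀ j, Q j ≤ G.endow j) :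
    RCG.PrefersCard pref G i Q P ↔
      RCG.utility pref G i P > RCG.utility pref G i Q := by
  have hPc : Multiset.card (P i) ≤ Multiset.card (G.endow i) := Multiset.card_le_card (hP i)
  have hQc : Multiset.card (Q i) ≤ Multiset.card (G.endow i) := Multiset.card_le_card (hQ i)
  unfold RCG.PrefersCard RCG.utility
  by_cases hgp : RCG.Good pref G P i <;> by_cases hgq : RCG.Good pref G Q i <;>
    simp [hgp, hgq] <;> omega
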